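/- Let N ≥ 1, a_1, a_2, a_3 ∈ ℝ^N, ε > 0, and suppose φ : Σ_3 → ℝ^N satisfies ‖φ(η) − a_{η_0}‖ ≤ ε for every η ∈ Σ_3. Let w : ℕ → {1,2,3} be the concatenation B_1 B_2 B_3 … of the blocks B_k, and let ξ ∈ Σ_3 be any admissible sequence with ξ_j = w_j for all j ≥ 0. Then limsup_{k→∞} ‖A_{n_k}(ξ) − (a_1/2 + a_2/3 + a_3/6)‖ ≤ ε and limsup_{k→∞} ‖A_{n̂_k}(ξ) − (a_1/2 + a_2/6 + a_3/3)‖ ≤ ε, where A_n(ξ) = (1/n) Σ_{i=0}^{n−1} φ(σ^i ξ). Consequently every limit point b of the sequence (A_{n_k}(ξ))_k satisfies ‖b − (a_1/2 + a_2/3 + a_3/6)‖ ≤ ε and every limit point b̂ of (A_{n̂_k}(ξ))_k satisfies ‖b̂ − (a_1/2 + a_2/6 + a_3/3)‖ ≤ ε. -/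

import Mathlib

open Filter Topology

/-- The symbol space `Σ_s`: bi-infinite admissible sequences over an alphabet with
`s` symbols (represented by `Fin s`), i.e. `ξ_i ≠ ξ_{i+1}` for all `i ∈ ℤ`. -/
def SymbSpace (s : ℕ) : Type := {ξ : ℤ → Fin s // ∀ i : ℤ, ξ i ≠ ξ (i + 1)}

/-- The (left) shift map `σ : Σ_s → Σ_s`, `(σξ)_i = ξ_{i+1}`. -/
def shift {s : ℕ} (ξ : SymbSpace s) : SymbSpace s :=
  ⟨fun i => ξ.1 (i + 1), fun i => ξ.2 (i + 1)⟩

/-- Birkhoff average `A_n(ξ) = (1/n) ∑_{i=0}^{n-1} φ(σ^i ξ)`. -/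
noncomputable def birk {s N : ℕ} (φ : SymbSpace s → EuclideanSpace ℝ (Fin N))
    (n : ℕ) (ξ : SymbSpace s) : EuclideanSpace ℝ (Fin N) :=
  (n : ℝ)⁻¹ • ∑ i ∈ Finset.range n, φ (shift^[i] ξ)

/- The symbols `1, 2, 3` of the paper are represented by `0, 1, 2 : Fin 3`. -/

/-- The `i`-th letter of the block `B_k`: the alternating word `1,2,1,2,…,1,2` of length
`2^{2k}` followed by the alternating word `1,3,1,3,…,1,3` of length `2^{2k+1}`. -/
def blockB (k i : ℕ) : Fin 3 :=
  if i < 2 ^ (2 * k) then (if i % 2 = 0 then 0 else 1)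
  else (if (i - 2 ^ (2 * k)) % 2 = 0 then 0 else 2)

/-- `m_k = 2^{2k} + 2^{2k+1}`, the length of the block `B_k`. -/
def mlen (k : ℕ) : ℕ := 2 ^ (2 * k) + 2 ^ (2 * k + 1)

/-- The `j`-th letter of the infinite concatenation `B_k B_{k+1} B_{k+2} ⋯`. -/
def wAux (k j : ℕ) : Fin 3 :=
  if h : j < mlen k then blockB k j
  else wAux (k + 1) (j - mlen k)
  termination_by j
  decreasing_by
    have h1 : 0 < mlen k := by unfold mlen; positivity
    omega

/-- The infinite concatenation `w = B_1 B_2 B_3 ⋯`. -/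
def w (j : ℕ) : Fin 3 := wAux 1 j

/-- `m_1 + m_2 + ⋯ + m_k`. -/
def msum (k : ℕ) : ℕ := ∑ i ∈ Finset.range k, mlen (i + 1)

/-- `n_k = m_1 + ⋯ + m_{k-1} + 2^{2k}`. -/
def nseq (k : ℕ) : ℕ := msum (k - 1) + 2 ^ (2 * k)

/-- `n̂_k = m_1 + ⋯ + m_k`. -/
def hatn (k : ℕ) : ℕ := msum k

lemma shift_iter {s : ℕ} (ξ : SymbSpace s) (i : ℕ) (j : ℤ) :
    (shift^[i] ξ).1 j = ξ.1 (j + i) := by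
  induction i generalizing ξ j with
  | zero => simp
  | succ n ih =>
    rw [Function.iterate_succ_apply, ih]
    show ξ.1 (j + n + 1) = ξ.1 (j + (n + 1 : ℕ))
    congr 1
    push_cast
    ring

lemma altsum {E : Type*} [AddCommGroup E] [Module ℝ E] (x y : E) (m : ℕ) :
    ∑ i ∈ Finset.range (2 * m), (if i % 2 = 0 then x else y) = (m : ℝ) • x + (m : ℝ) • y := by
  induction m with
  | zero => simp
  | succ n ih =>
    rw [show 2 * (n + 1) = (2 * n + 1) + 1 by ring, Finset.sum_range_succ,
      Finset.sum_range_succ, ih, if_pos (by omega : (2 * n) % 2 = 0),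
      if_neg (by omega : ¬ (2 * n + 1) % 2 = 0)]
    push_cast
    module

def Qn (k : ℕ) : ℕ := ∑ i ∈ Finset.range k, 2 ^ (2 * i + 1)

lemma Qn_succ (k : ℕ) : Qn (k + 1) = Qn k + 2 ^ (2 * k + 1) := Finset.sum_range_succ _ _

lemma msum_eq (k : ℕ) : msum k = 6 * Qn k := by
  unfold msum Qn
  rw [Finset.mul_sum]
  refine Finset.sum_congr rfl fun i _ => ?_
  unfold mlen
  ring

lemma three_Qn (k : ℕ) : 3 * Qn k + 2 = 2 ^ (2 * k + 1) := by
  induction k with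
  | zero => simp [Qn]
  | succ n ih =>
    rw [Qn_succ, show 2 ^ (2 * (n + 1) + 1) = 4 * 2 ^ (2 * n + 1) by ring]
    omega

lemma Qn_ge (k : ℕ) : k ≤ Qn k := by
  induction k with
  | zero => simp
  | succ n ih =>
    rw [Qn_succ]
    have := Nat.one_le_two_pow (n := 2 * n + 1)
    omega

lemma wAux_shift (k j : ℕ) : wAux k (mlen k + j) = wAux (k + 1) j := by
  rw [wAux, dif_neg (by omega : ¬ mlen k + j < mlen k), Nat.add_sub_cancel_left]

lemma w_shift (k j : ℕ) : w (msum k + j) = wAux (k + 1) j := by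
  induction k generalizing j with
  | zero => simp [w, msum]
  | succ n ih =>
    rw [show msum (n + 1) = msum n + mlen (n + 1) from Finset.sum_range_succ _ _,
      add_assoc, ih (mlen (n + 1) + j), wAux_shift]

lemma sum_halfblock {E : Type*} [AddCommGroup E] [Module ℝ E] (f : Fin 3 → E) (k : ℕ) :
    ∑ j ∈ Finset.range (2 ^ (2 * (k + 1))), f (blockB (k + 1) j)
      = ((2 : ℝ) ^ (2 * k + 1)) • f 0 + ((2 : ℝ) ^ (2 * k + 1)) • f 1 := by
  have h2 : 2 ^ (2 * (k + 1)) = 2 * 2 ^ (2 * k + 1) := by ring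
  have key : ∑ j ∈ Finset.range (2 ^ (2 * (k + 1))), f (blockB (k + 1) j)
      = ∑ j ∈ Finset.range (2 ^ (2 * (k + 1))), (if j % 2 = 0 then f 0 else f 1) := by
    refine Finset.sum_congr rfl fun j hj => ?_
    rw [Finset.mem_range] at hj
    unfold blockB
    rw [if_pos hj]
    exact apply_ite f (_ % 2 = 0) _ _
  rw [key, h2, altsum]
  push_cast
  module

lemma sum_block {E : Type*} [AddCommGroup E] [Module ℝ E] (f : Fin 3 → E) (k : ℕ) :
    ∑ j ∈ Finset.range (mlen (k + 1)), f (blockB (k + 1) j)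
      = (3 * (2 : ℝ) ^ (2 * k + 1)) • f 0 + ((2 : ℝ) ^ (2 * k + 1)) • f 1
        + (2 * (2 : ℝ) ^ (2 * k + 1)) • f 2 := by
  rw [show mlen (k + 1) = 2 ^ (2 * (k + 1)) + 2 ^ (2 * (k + 1) + 1) from rfl,
    Finset.sum_range_add, sum_halfblock]
  have key : ∑ i ∈ Finset.range (2 ^ (2 * (k + 1) + 1)),
        f (blockB (k + 1) (2 ^ (2 * (k + 1)) + i))
      = ∑ i ∈ Finset.range (2 ^ (2 * (k + 1) + 1)), (if i % 2 = 0 then f 0 else f 2) := by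
    refine Finset.sum_congr rfl fun i _ => ?_
    unfold blockB
    rw [if_neg (by omega : ¬ 2 ^ (2 * (k + 1)) + i < 2 ^ (2 * (k + 1))),
      Nat.add_sub_cancel_left]
    exact apply_ite f (_ % 2 = 0) _ _
  rw [key, show 2 ^ (2 * (k + 1) + 1) = 2 * 2 ^ (2 * (k + 1)) by ring, altsum]
  push_cast
  module

lemma sum_w_msum {E : Type*} [AddCommGroup E] [Module ℝ E] (f : Fin 3 → E) (k : ℕ) :
    ∑ i ∈ Finset.range (msum k), f (w i)
      = ((3 * Qn k : ℕ) : ℝ) • f 0 + ((Qn k : ℕ) : ℝ) • f 1 + ((2 * Qn k : ℕ) : ℝ) • f 2 := by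
  induction k with
  | zero => simp [msum, Qn]
  | succ n ih =>
    rw [show msum (n + 1) = msum n + mlen (n + 1) from Finset.sum_range_succ _ _,
      Finset.sum_range_add, ih]
    have key : ∑ i ∈ Finset.range (mlen (n + 1)), f (w (msum n + i))
        = ∑ i ∈ Finset.range (mlen (n + 1)), f (blockB (n + 1) i) := by
      refine Finset.sum_congr rfl fun i hi => ?_
      rw [Finset.mem_range] at hi
      rw [w_shift, wAux, dif_pos hi]
    rw [key, sum_block, Qn_succ]
    push_cast
    module

lemma sum_w_nseq {E : Type*} [AddCommGroup E] [Module ℝ E] (f : Fin 3 → E) (k : ℕ) :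
    ∑ i ∈ Finset.range (nseq (k + 1)), f (w i)
      = ((3 * Qn k : ℕ) + (2 : ℝ) ^ (2 * k + 1)) • f 0
        + (((Qn k : ℕ) : ℝ) + (2 : ℝ) ^ (2 * k + 1)) • f 1
        + ((2 * Qn k : ℕ) : ℝ) • f 2 := by
  have h : nseq (k + 1) = msum k + 2 ^ (2 * (k + 1)) := by simp [nseq]
  rw [h, Finset.sum_range_add, sum_w_msum]
  have key : ∑ i ∈ Finset.range (2 ^ (2 * (k + 1))), f (w (msum k + i))
      = ∑ i ∈ Finset.range (2 ^ (2 * (k + 1))), f (blockB (k + 1) i) := by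
    refine Finset.sum_congr rfl fun i hi => ?_
    rw [Finset.mem_range] at hi
    have hi' : i < mlen (k + 1) := by unfold mlen; omega
    rw [w_shift, wAux, dif_pos hi']
  rw [key, sum_halfblock]
  push_cast
  module

lemma birk_close {N : ℕ} (a : Fin 3 → EuclideanSpace ℝ (Fin N)) (ε : ℝ) (hε : 0 < ε)
    (φ : SymbSpace 3 → EuclideanSpace ℝ (Fin N))
    (hφ : ∀ η : SymbSpace 3, ‖φ η - a (η.1 0)‖ ≤ ε)
    (ξ : SymbSpace 3) (hξ : ∀ j : ℕ, ξ.1 (j : ℤ) = w j) (n : ℕ) :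
    ‖birk φ n ξ - (n : ℝ)⁻¹ • ∑ i ∈ Finset.range n, a (w i)‖ ≤ ε := by
  rcases Nat.eq_zero_or_pos n with h | h
  · subst h; simpa [birk] using hε.le
  unfold birk
  rw [← smul_sub, ← Finset.sum_sub_distrib, norm_smul, Real.norm_eq_abs,
    abs_of_nonneg (by positivity)]
  have hterm : ∀ i ∈ Finset.range n, ‖φ (shift^[i] ξ) - a (w i)‖ ≤ ε := by
    intro i _
    have h0 : (shift^[i] ξ).1 0 = w i := by rw [shift_iter]; simpa using hξ i
    calc ‖φ (shift^[i] ξ) - a (w i)‖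
        = ‖φ (shift^[i] ξ) - a ((shift^[i] ξ).1 0)‖ := by rw [h0]
      _ ≤ ε := hφ _
  have hb : ‖∑ i ∈ Finset.range n, (φ (shift^[i] ξ) - a (w i))‖ ≤ n * ε := by
    refine le_trans (norm_sum_le _ _) ?_
    calc ∑ i ∈ Finset.range n, ‖φ (shift^[i] ξ) - a (w i)‖
        ≤ ∑ _i ∈ Finset.range n, ε := Finset.sum_le_sum hterm
      _ = n * ε := by simp [mul_comm]
  have hn : (0 : ℝ) < (n : ℝ) := by exact_mod_cast h
  calc (n : ℝ)⁻¹ * ‖∑ i ∈ Finset.range n, (φ (shift^[i] ξ) - a (w i))‖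
      ≤ (n : ℝ)⁻¹ * (n * ε) := by gcongr
    _ = ε := by field_simp

lemma cluster_le {E : Type*} [NormedAddCommGroup E] {u : ℕ → E} {t b : E} {ε : ℝ}
    (hbdd : Filter.IsBoundedUnder (· ≤ ·) atTop (fun k => ‖u k - t‖))
    (hls : Filter.limsup (fun k => ‖u k - t‖) atTop ≤ ε)
    (hb : MapClusterPt b atTop u) : ‖b - t‖ ≤ ε := by
  by_contra hcon
  push_neg at hcon
  have hδ : (0 : ℝ) < (‖b - t‖ - ε) / 2 := by linarith
  have hfreq : ∃ᶠ k in atTop, u k ∈ Metric.ball b ((‖b - t‖ - ε) / 2) :=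
    (mapClusterPt_iff_frequently.1 hb) _ (Metric.ball_mem_nhds b hδ)
  have hfreq2 : ∃ᶠ k in atTop, (ε + ‖b - t‖) / 2 ≤ ‖u k - t‖ := by
    refine hfreq.mono fun k hk => ?_
    rw [Metric.mem_ball, dist_eq_norm] at hk
    have htri : ‖b - t‖ ≤ ‖b - u k‖ + ‖u k - t‖ := by
      have := dist_triangle b (u k) t
      simpa [dist_eq_norm] using this
    rw [norm_sub_rev] at hk
    linarith
  have := le_limsup_of_frequently_le hfreq2 hbdd
  linarith

/-- for `ξ ∈ Σ_3` agreeing with `w = B_1 B_2 B_3 ⋯` in nonnegative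
coordinates, and `φ` with `‖φ(η) - a_{η_0}‖ ≤ ε`, the Birkhoff averages along `n_k`
(resp. `n̂_k`) eventually lie `ε`-close to `a_1/2 + a_2/3 + a_3/6` (resp.
`a_1/2 + a_2/6 + a_3/3`); consequently all limit points of these subsequences satisfy
the same bounds.  (The index `k` runs over `k ≥ 1`, i.e. over `k + 1`, `k : ℕ`.) -/
theorem limit_points_of_two_subsequences (N : ℕ) (hN : 1 ≤ N)
    (a : Fin 3 → EuclideanSpace ℝ (Fin N)) (ε : ℝ) (hε : 0 < ε)
    (φ : SymbSpace 3 → EuclideanSpace ℝ (Fin N))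
    (hφ : ∀ η : SymbSpace 3, ‖φ η - a (η.1 0)‖ ≤ ε)
    (ξ : SymbSpace 3) (hξ : ∀ j : ℕ, ξ.1 (j : ℤ) = w j) :
    (Filter.limsup (fun k : ℕ =>
        ‖birk φ (nseq (k + 1)) ξ - ((1/2 : ℝ) • a 0 + (1/3 : ℝ) • a 1 + (1/6 : ℝ) • a 2)‖)
      atTop ≤ ε) ∧
    (Filter.limsup (fun k : ℕ =>
        ‖birk φ (hatn (k + 1)) ξ - ((1/2 : ℝ) • a 0 + (1/6 : ℝ) • a 1 + (1/3 : ℝ) • a 2)‖)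
      atTop ≤ ε) ∧
    (∀ b : EuclideanSpace ℝ (Fin N),
        MapClusterPt b atTop (fun k : ℕ => birk φ (nseq (k + 1)) ξ) →
        ‖b - ((1/2 : ℝ) • a 0 + (1/3 : ℝ) • a 1 + (1/6 : ℝ) • a 2)‖ ≤ ε) ∧
    (∀ b : EuclideanSpace ℝ (Fin N),
        MapClusterPt b atTop (fun k : ℕ => birk φ (hatn (k + 1)) ξ) →
        ‖b - ((1/2 : ℝ) • a 0 + (1/6 : ℝ) • a 1 + (1/3 : ℝ) • a 2)‖ ≤ ε) := by
  set t1 : EuclideanSpace ℝ (Fin N) :=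
    (1/2 : ℝ) • a 0 + (1/3 : ℝ) • a 1 + (1/6 : ℝ) • a 2 with ht1
  set t2 : EuclideanSpace ℝ (Fin N) :=
    (1/2 : ℝ) • a 0 + (1/6 : ℝ) • a 1 + (1/3 : ℝ) • a 2 with ht2
  -- pointwise bound along hatn: the average of a ∘ w is exactly t2
  have F1 : ∀ k : ℕ, ‖birk φ (hatn (k + 1)) ξ - t2‖ ≤ ε := by
    intro k
    have hq : 1 ≤ Qn (k + 1) := le_trans (by omega) (Qn_ge (k + 1))
    have hQ0 : ((Qn (k + 1) : ℕ) : ℝ) ≠ 0 := by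
      exact_mod_cast Nat.one_le_iff_ne_zero.mp hq
    have hg : ((hatn (k + 1) : ℕ) : ℝ)⁻¹ • (∑ i ∈ Finset.range (hatn (k + 1)), a (w i))
        = t2 := by
      show ((msum (k + 1) : ℕ) : ℝ)⁻¹ • (∑ i ∈ Finset.range (msum (k + 1)), a (w i)) = t2
      rw [sum_w_msum, msum_eq, ht2]
      push_cast
      match_scalars <;> (field_simp; try ring)
    rw [← hg]
    exact birk_close a ε hε φ hφ ξ hξ _
  -- pointwise bound along nseq, with a vanishing error term
  have F2 : ∀ k : ℕ, ‖birk φ (nseq (k + 1)) ξ - t1‖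
      ≤ ε + (2 / 3 * ‖a 1 - a 2‖) * ((nseq (k + 1) : ℕ) : ℝ)⁻¹ := by
    intro k
    have hnN : nseq (k + 1) = 12 * Qn k + 4 := by
      have h1 : nseq (k + 1) = msum k + 2 ^ (2 * (k + 1)) := by simp [nseq]
      have h2 : 2 ^ (2 * (k + 1)) = 2 * 2 ^ (2 * k + 1) := by ring
      have h3 := three_Qn k
      have h4 := msum_eq k
      omega
    have hQR : ((2 : ℝ)) ^ (2 * k + 1) = 3 * (Qn k : ℝ) + 2 := by
      have h := three_Qn k
      have : ((3 * Qn k + 2 : ℕ) : ℝ) = ((2 ^ (2 * k + 1) : ℕ) : ℝ) := by rw [h]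
      push_cast at this
      linarith
    have hnR : ((nseq (k + 1) : ℕ) : ℝ) = 12 * (Qn k : ℝ) + 4 := by
      rw [hnN]; push_cast; ring
    have h12 : (12 * (Qn k : ℝ) + 4) ≠ 0 := by positivity
    have hn0 : ((nseq (k + 1) : ℕ) : ℝ) ≠ 0 := by rw [hnR]; exact h12
    have hg : ((nseq (k + 1) : ℕ) : ℝ)⁻¹ • (∑ i ∈ Finset.range (nseq (k + 1)), a (w i)) - t1
        = (2 / (3 * ((nseq (k + 1) : ℕ) : ℝ))) • (a 1 - a 2) := by
      rw [sum_w_nseq, hQR, hnR, ht1]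
      push_cast
      match_scalars <;> (field_simp; try ring)
    have htri : ‖birk φ (nseq (k + 1)) ξ - t1‖
        ≤ ‖birk φ (nseq (k + 1)) ξ
            - ((nseq (k + 1) : ℕ) : ℝ)⁻¹ • (∑ i ∈ Finset.range (nseq (k + 1)), a (w i))‖
          + ‖((nseq (k + 1) : ℕ) : ℝ)⁻¹ • (∑ i ∈ Finset.range (nseq (k + 1)), a (w i)) - t1‖ := by
      have := dist_triangle (birk φ (nseq (k + 1)) ξ)
        (((nseq (k + 1) : ℕ) : ℝ)⁻¹ • (∑ i ∈ Finset.range (nseq (k + 1)), a (w i))) t1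
      simpa [dist_eq_norm] using this
    refine le_trans htri ?_
    have h2 : ‖((nseq (k + 1) : ℕ) : ℝ)⁻¹ • (∑ i ∈ Finset.range (nseq (k + 1)), a (w i)) - t1‖
        = (2 / 3 * ‖a 1 - a 2‖) * ((nseq (k + 1) : ℕ) : ℝ)⁻¹ := by
      rw [hg, norm_smul, Real.norm_eq_abs, abs_of_nonneg (by rw [hnR]; positivity)]
      rw [hnR]
      field_simp
      try ring
    rw [h2]
    exact add_le_add_left (birk_close a ε hε φ hφ ξ hξ _) _
  -- the error term tends to zero
  have hmono : ∀ k : ℕ, (k : ℕ) ≤ nseq (k + 1) := by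
    intro k
    have h1 := Qn_ge k
    have h2 : nseq (k + 1) = 12 * Qn k + 4 := by
      have h1' : nseq (k + 1) = msum k + 2 ^ (2 * (k + 1)) := by simp [nseq]
      have h2' : 2 ^ (2 * (k + 1)) = 2 * 2 ^ (2 * k + 1) := by ring
      have h3 := three_Qn k
      have h4 := msum_eq k
      omega
    omega
  have h1 : Tendsto (fun k : ℕ => ((nseq (k + 1) : ℕ) : ℝ)) atTop atTop := by
    apply tendsto_natCast_atTop_atTop.comp
    exact tendsto_atTop_mono hmono tendsto_id
  have htend : Tendsto (fun k : ℕ => ε + (2 / 3 * ‖a 1 - a 2‖) * ((nseq (k + 1) : ℕ) : ℝ)⁻¹)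
      atTop (𝓝 ε) := by
    have h2 : Tendsto (fun k : ℕ => ((nseq (k + 1) : ℕ) : ℝ)⁻¹) atTop (𝓝 0) :=
      h1.inv_tendsto_atTop
    have h3 := h2.const_mul (2 / 3 * ‖a 1 - a 2‖)
    have h4 := (tendsto_const_nhds (x := ε) (f := atTop (α := ℕ))).add h3
    simpa using h4
  -- limsup along nseq
  have hcb1 : IsCoboundedUnder (· ≤ ·) atTop
      (fun k : ℕ => ‖birk φ (nseq (k + 1)) ξ - t1‖) :=
    (isBoundedUnder_of (r := (· ≥ ·)) ⟨0, fun k => norm_nonneg _⟩).isCoboundedUnder_le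
  have hbd1 : IsBoundedUnder (· ≤ ·) atTop
      (fun k : ℕ => ε + (2 / 3 * ‖a 1 - a 2‖) * ((nseq (k + 1) : ℕ) : ℝ)⁻¹) :=
    htend.isBoundedUnder_le
  have L1 : Filter.limsup (fun k : ℕ => ‖birk φ (nseq (k + 1)) ξ - t1‖) atTop ≤ ε := by
    have h := limsup_le_limsup (Eventually.of_forall F2) hcb1 hbd1
    rwa [htend.limsup_eq] at h
  -- limsup along hatn
  have hcb2 : IsCoboundedUnder (· ≤ ·) atTop
      (fun k : ℕ => ‖birk φ (hatn (k + 1)) ξ - t2‖) :=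
    (isBoundedUnder_of (r := (· ≥ ·)) ⟨0, fun k => norm_nonneg _⟩).isCoboundedUnder_le
  have L2 : Filter.limsup (fun k : ℕ => ‖birk φ (hatn (k + 1)) ξ - t2‖) atTop ≤ ε :=
    limsup_le_of_le hcb2 (Eventually.of_forall F1)
  refine ⟨L1, L2, ?_, ?_⟩
  · intro b hb
    exact cluster_le (hbd1.mono_le (Eventually.of_forall F2)) L1 hb
  · intro b hb
    exact cluster_le (isBoundedUnder_of (r := (· ≤ ·)) ⟨ε, F1⟩) L2 hb
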